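/- Let n ≥ 2. The dihedral group DihedralGroup (2^n) of order 2^(n+1) has exactly 2^(n-1) subgroups isomorphic to the Klein four-group ZMod 2 × ZMod 2. -/

import Mathlib

open DihedralGroup

namespace DihedralKleinAux

lemma c_add_c (k : ℕ) : ((k : ZMod (2*k)) + (k : ZMod (2*k))) = 0 := by
  rw [← Nat.cast_add, ← two_mul, ZMod.natCast_self]

lemma c_neg (k : ℕ) : -((k : ZMod (2*k))) = (k : ZMod (2*k)) :=
  neg_eq_of_add_eq_zero_left (c_add_c k)

lemma c_ne_zero {k : ℕ} (hk : k ≠ 0) : (k : ZMod (2*k)) ≠ 0 := by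
  haveI : NeZero (2*k) := ⟨by omega⟩
  intro h
  rw [ZMod.natCast_eq_zero_iff] at h
  exact absurd (Nat.le_of_dvd (by omega) h) (by omega)

lemma rot_invol {k : ℕ} (hk : k ≠ 0) {j : ZMod (2*k)} (hj : j + j = 0) :
    j = 0 ∨ j = (k : ZMod (2*k)) := by
  haveI : NeZero (2*k) := ⟨by omega⟩
  have hv : ((j.val + j.val : ℕ) : ZMod (2*k)) = 0 := by
    push_cast
    rw [ZMod.natCast_val, ZMod.cast_id, hj]
  rw [ZMod.natCast_eq_zero_iff] at hv
  obtain ⟨t, ht⟩ := hv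
  have hjv : j.val = k * t := by linarith
  have hk0 : 0 < k := Nat.pos_of_ne_zero hk
  have hlt := ZMod.val_lt j
  have ht2 : t < 2 := by nlinarith
  interval_cases t
  · left
    rw [← ZMod.natCast_zmod_val j, hjv]
    simp
  · right
    rw [← ZMod.natCast_zmod_val j, hjv, mul_one]

/-- The Klein four subgroup `{1, r k, sr i, sr (i+k)}` of `DihedralGroup (2*k)`. -/
def klein (k : ℕ) (i : ZMod (2*k)) : Subgroup (DihedralGroup (2*k)) where
  carrier := {1, r (k : ZMod (2*k)), sr i, sr (i + (k : ZMod (2*k)))}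
  one_mem' := Or.inl rfl
  mul_mem' := by
    have hcc := c_add_c k
    have hneg := c_neg k
    have hsub : ∀ x : ZMod (2*k), x - (k : ZMod (2*k)) = x + (k : ZMod (2*k)) := fun x => by
      rw [sub_eq_add_neg, hneg]
    have hsub2 : ∀ x : ZMod (2*k), x - (x + (k : ZMod (2*k))) = (k : ZMod (2*k)) := fun x => by
      rw [sub_add_cancel_left, hneg]
    rintro a b (rfl|rfl|rfl|rfl) (rfl|rfl|rfl|rfl) <;>
      simp only [one_mul, mul_one, r_mul_r, r_mul_sr, sr_mul_r, sr_mul_sr,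
        Set.mem_insert_iff, Set.mem_singleton_iff, one_def, sub_self,
        add_sub_cancel_right, add_sub_cancel_left, hsub2, hsub, zero_add, sub_zero,
        add_assoc, hcc, add_zero, r.injEq, sr.injEq] <;>
      tauto
  inv_mem' := by
    have hcc := c_add_c k
    rintro a (rfl|rfl|rfl|rfl)
    · exact Or.inl inv_one
    · rw [inv_eq_of_mul_eq_one_right (by rw [r_mul_r, hcc, one_def])]
      exact Or.inr (Or.inl rfl)
    · rw [inv_eq_of_mul_eq_one_right (sr_mul_self i)]
      exact Or.inr (Or.inr (Or.inl rfl))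
    · rw [inv_eq_of_mul_eq_one_right (sr_mul_self _)]
      exact Or.inr (Or.inr (Or.inr rfl))

lemma mem_klein {k : ℕ} {i : ZMod (2*k)} {x : DihedralGroup (2*k)} :
    x ∈ klein k i ↔
      x = 1 ∨ x = r (k : ZMod (2*k)) ∨ x = sr i ∨ x = sr (i + (k : ZMod (2*k))) :=
  Iff.rfl

lemma klein_card {k : ℕ} (hk : k ≠ 0) (i : ZMod (2*k)) : Nat.card (klein k i) = 4 := by
  have hc := c_ne_zero hk
  have h1 : (klein k i : Set (DihedralGroup (2*k)))
      = {1, r (k : ZMod (2*k)), sr i, sr (i + (k : ZMod (2*k)))} := rfl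
  rw [show Nat.card (klein k i) = ({1, r (k : ZMod (2*k)), sr i, sr (i + (k : ZMod (2*k)))} : Set (DihedralGroup (2*k))).ncard from Nat.card_coe_set_eq _]
  rw [Set.ncard_insert_of_notMem (by simp [one_def, hc.symm, -r_zero]),
    Set.ncard_insert_of_notMem (by simp),
    Set.ncard_insert_of_notMem (by simp [(left_eq_add).not.mpr hc]),
    Set.ncard_singleton]

lemma klein_isKleinFour {k : ℕ} (hk : k ≠ 0) (i : ZMod (2*k)) :
    IsKleinFour (klein k i) where
  card_four := klein_card hk i
  exponent_two := by
    have hcc := c_add_c k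
    have h2 : ∀ g : klein k i, g ^ 2 = 1 := by
      rintro ⟨x, hx⟩
      ext
      push_cast
      show x ^ 2 = 1
      rcases hx with rfl|rfl|rfl|rfl
      · simp
      · rw [pow_two, r_mul_r, hcc, one_def]
      · rw [pow_two, sr_mul_self]
      · rw [pow_two, sr_mul_self]
    have hdvd := Monoid.exponent_dvd_of_forall_pow_eq_one h2
    have hmem : sr i ∈ klein k i := Or.inr (Or.inr (Or.inl rfl))
    have horder : orderOf (⟨sr i, hmem⟩ : klein k i) = 2 := by
      rw [← orderOf_injective (klein k i).subtype (klein k i).subtype_injective]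
      exact orderOf_sr i
    have hd2 := Monoid.order_dvd_exponent (⟨sr i, hmem⟩ : klein k i)
    rw [horder] at hd2
    exact Nat.dvd_antisymm hdvd hd2

lemma klein_shift (k : ℕ) (i : ZMod (2*k)) :
    klein k (i + (k : ZMod (2*k))) = klein k i := by
  have hcc := c_add_c k
  ext x
  rw [mem_klein, mem_klein, add_assoc, hcc, add_zero]
  tauto

lemma klein_inj {k : ℕ} {i j : ZMod (2*k)} (h : klein k i = klein k j) :
    i = j ∨ i = j + (k : ZMod (2*k)) := by
  have : sr i ∈ klein k j := h ▸ (Or.inr (Or.inr (Or.inl rfl)) : sr i ∈ klein k i)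
  rcases this with h1|h1|h1|h1
  · exact absurd h1 (by simp [one_def, -r_zero])
  · exact absurd h1 (by simp)
  · exact Or.inl (by injection h1)
  · exact Or.inr (by injection h1)

lemma klein_of_iso {k : ℕ} (hk : k ≠ 0) {H : Subgroup (DihedralGroup (2*k))}
    (e : H ≃* Multiplicative (ZMod 2 × ZMod 2)) : ∃ i, H = klein k i := by
  haveI : NeZero (2*k) := ⟨by omega⟩
  have hcard : Nat.card H = 4 := by
    rw [Nat.card_congr e.toEquiv]
    exact IsKleinFour.card_four
  have hsq : ∀ x ∈ H, x * x = 1 := by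
    intro x hx
    have h1 : (⟨x, hx⟩ : H) * ⟨x, hx⟩ = 1 := by
      apply e.injective
      rw [map_mul, map_one]
      exact IsKleinFour.mul_self _
    exact congrArg Subtype.val h1
  have hrot : ∀ j : ZMod (2*k), r j ∈ H → j = 0 ∨ j = (k : ZMod (2*k)) := by
    intro j hj
    have := hsq _ hj
    rw [r_mul_r, one_def] at this
    exact rot_invol hk (by injection this)
  have hcard_le : ∀ a b : DihedralGroup (2*k),
      (H : Set (DihedralGroup (2*k))) ⊆ {a, b} → False := by
    intro a b hsub
    have h1 : Nat.card H ≤ 2 := by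
      rw [show Nat.card H = (H : Set (DihedralGroup (2*k))).ncard from Nat.card_coe_set_eq _]
      calc (H : Set (DihedralGroup (2*k))).ncard ≤ ({a, b} : Set _).ncard :=
            Set.ncard_le_ncard hsub (Set.toFinite _)
        _ ≤ 2 := (Set.ncard_insert_le _ _).trans (by simp)
    omega
  -- there is a reflection in H
  obtain ⟨i, hi⟩ : ∃ i, sr i ∈ H := by
    by_contra hns
    push_neg at hns
    refine hcard_le 1 (r (k : ZMod (2*k))) ?_
    rintro (⟨j⟩|⟨j⟩) hx
    · rcases hrot j hx with rfl|rfl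
      · exact Or.inl one_def.symm
      · exact Or.inr rfl
    · exact absurd hx (hns j)
  -- the central rotation is in H
  have hrk : r (k : ZMod (2*k)) ∈ H := by
    by_contra hnr
    have hsub : (H : Set (DihedralGroup (2*k))) ⊆ {1, sr i} := by
      rintro (⟨j⟩|⟨j⟩) hx
      · rcases hrot j hx with rfl|rfl
        · exact Or.inl one_def.symm
        · exact absurd hx hnr
      · rcases eq_or_ne j i with rfl|hji
        · exact Or.inr rfl
        · exfalso
          have hmem : r (j - i) ∈ H := by
            have := H.mul_mem hi hx
            rwa [sr_mul_sr] at this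
          rcases hrot _ hmem with h0|hc
          · exact hji (sub_eq_zero.mp h0)
          · rw [hc] at hmem
            exact hnr hmem
    exact hcard_le _ _ hsub
  have hle : klein k i ≤ H := by
    rintro x (rfl|rfl|rfl|rfl)
    · exact H.one_mem
    · exact hrk
    · exact hi
    · have := H.mul_mem hi hrk
      rwa [sr_mul_r] at this
  exact ⟨i, (Subgroup.eq_of_le_of_card_ge hle (by rw [hcard, klein_card hk i])).symm⟩

lemma main (k : ℕ) (hk : k ≠ 0) :
    Nat.card {H : Subgroup (DihedralGroup (2*k)) //
      Nonempty (H ≃* Multiplicative (ZMod 2 × ZMod 2))} = k := by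
  haveI : NeZero (2*k) := ⟨by omega⟩
  set f : Fin k → {H : Subgroup (DihedralGroup (2*k)) //
      Nonempty (H ≃* Multiplicative (ZMod 2 × ZMod 2))} :=
    fun a => ⟨klein k ((a : ℕ) : ZMod (2*k)),
      haveI := klein_isKleinFour hk ((a : ℕ) : ZMod (2*k))
      IsKleinFour.nonempty_mulEquiv⟩ with hf
  have hbij : Function.Bijective f := by
    constructor
    · intro a b hab
      have h := klein_inj (congrArg Subtype.val hab)
      rcases h with h|h
      · have := (ZMod.natCast_eq_natCast_iff _ _ _).mp h
        have h1 : (a : ℕ) % (2*k) = (b : ℕ) % (2*k) := this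
        rw [Nat.mod_eq_of_lt (by omega), Nat.mod_eq_of_lt (by omega)] at h1
        exact Fin.ext h1
      · exfalso
        rw [← Nat.cast_add] at h
        have := (ZMod.natCast_eq_natCast_iff _ _ _).mp h
        have h1 : (a : ℕ) % (2*k) = ((b : ℕ) + k) % (2*k) := this
        rw [Nat.mod_eq_of_lt (by omega), Nat.mod_eq_of_lt (by omega)] at h1
        omega
    · rintro ⟨H, ⟨e⟩⟩
      obtain ⟨i, rfl⟩ := klein_of_iso hk e
      have hlt := ZMod.val_lt i
      rcases lt_or_ge i.val k with hv|hv
      · refine ⟨⟨i.val, hv⟩, Subtype.ext ?_⟩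
        simp only [hf]
        rw [ZMod.natCast_zmod_val]
      · refine ⟨⟨i.val - k, by omega⟩, Subtype.ext ?_⟩
        have hcast : ((i.val - k : ℕ) : ZMod (2*k)) + (k : ZMod (2*k)) = i := by
          rw [← Nat.cast_add, Nat.sub_add_cancel hv, ZMod.natCast_zmod_val]
        show klein k ((i.val - k : ℕ) : ZMod (2*k)) = klein k i
        conv_rhs => rw [← hcast]
        rw [klein_shift]
  rw [← Nat.card_eq_of_bijective f hbij, Nat.card_eq_fintype_card, Fintype.card_fin]

end DihedralKleinAux

/-- `DihedralGroup (2^n)` (`n ≥ 2`) has exactly `2^(n-1)` subgroups isomorphic to the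
Klein four-group. -/
theorem dihedral_count_klein_four_subgroups (n : ℕ) (hn : 2 ≤ n) :
    Nat.card {H : Subgroup (DihedralGroup (2 ^ n)) //
      Nonempty (H ≃* Multiplicative (ZMod 2 × ZMod 2))} = 2 ^ (n - 1) := by
  have h2 : 2 ^ n = 2 * 2 ^ (n - 1) := by
    rw [← pow_succ']
    congr 1
    omega
  rw [h2]
  exact DihedralKleinAux.main _ (by positivity)
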